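/- Let σ : ℝ → ℝ be differentiable, let a₁, a₂, b : ℝ → ℝ, and let V : ℝ × ℝ² → ℝ be twice continuously differentiable in the space variables. Set A(t,x) = (σ(t)x₂, −σ(t)x₁), Γ(t) = [[0, σ(t)],[−σ(t), 0]], and g(t) = [[a₁(t), b(t)],[b(t), a₂(t)]]. Then at every (t,x) ∈ ℝ × ℝ², the 2×2 matrix g(t)·M(t,x) is symmetric, where M_{cb}(t,x) = ∂²V/∂x^c∂x^b(t,x) + (1/2)(∂²A^c/∂t∂x^b + ∂²A^b/∂t∂x^c)(t,x) − (Γ(t)²)_{cb}, if and only if b(t)·(∂²V/∂x₂² − ∂²V/∂x₁²)(t,x) = (a₂(t) − a₁(t))·(∂²V/∂x₁∂x₂)(t,x). -/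

import Mathlib

open Matrix

lemma snd_eval (f : (Fin 2 → ℝ) → ℝ) (hf : ContDiff ℝ 2 f) (x v w : Fin 2 → ℝ) :
    fderiv ℝ (fun x' => fderiv ℝ f x' v) x w = fderiv ℝ (fderiv ℝ f) x w v := by
  have hd : DifferentiableAt ℝ (fderiv ℝ f) x :=
    ((hf.fderiv_right (m := 1) (by norm_num)).differentiable (by norm_num)).differentiableAt
  rw [fderiv_clm_apply hd (differentiableAt_const v)]
  simp

lemma snd_symm (f : (Fin 2 → ℝ) → ℝ) (hf : ContDiff ℝ 2 f) (x v w : Fin 2 → ℝ) :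
    fderiv ℝ (fun x' => fderiv ℝ f x' v) x w = fderiv ℝ (fun x' => fderiv ℝ f x' w) x v := by
  rw [snd_eval f hf, snd_eval f hf]
  exact (hf.contDiffAt.isSymmSndFDerivAt (by simp [minSmoothness_of_isRCLikeNormedField])).eq w v

theorem two_dim_Phi_condition
    (σ : ℝ → ℝ) (hσ : Differentiable ℝ σ)
    (a₁ a₂ b : ℝ → ℝ)
    (V : ℝ × (Fin 2 → ℝ) → ℝ)
    (hV : ∀ t : ℝ, ContDiff ℝ 2 (fun x : Fin 2 → ℝ => V (t, x)))
    (A : ℝ × (Fin 2 → ℝ) → (Fin 2 → ℝ))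
    (hA : ∀ (t : ℝ) (x : Fin 2 → ℝ), A (t, x) = ![σ t * x 1, -(σ t * x 0)])
    (Γ : ℝ → Matrix (Fin 2) (Fin 2) ℝ)
    (hΓ : ∀ t, Γ t = !![0, σ t; -(σ t), 0])
    (g : ℝ → Matrix (Fin 2) (Fin 2) ℝ)
    (hg : ∀ t, g t = !![a₁ t, b t; b t, a₂ t])
    (M : ℝ → (Fin 2 → ℝ) → Matrix (Fin 2) (Fin 2) ℝ)
    (hM : ∀ (t : ℝ) (x : Fin 2 → ℝ), M t x = Matrix.of fun c b' =>
      fderiv ℝ (fun x' : Fin 2 → ℝ =>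
          fderiv ℝ (fun x'' : Fin 2 → ℝ => V (t, x'')) x' (Pi.single b' 1)) x
        (Pi.single c 1)
      + (1/2) * (deriv (fun s : ℝ =>
            fderiv ℝ (fun x' : Fin 2 → ℝ => A (s, x') c) x (Pi.single b' 1)) t
          + deriv (fun s : ℝ =>
            fderiv ℝ (fun x' : Fin 2 → ℝ => A (s, x') b') x (Pi.single c 1)) t)
      - (Γ t ^ 2) c b') :
    ∀ (t : ℝ) (x : Fin 2 → ℝ),
      (g t * M t x)ᵀ = g t * M t x
      ↔ b t * (fderiv ℝ (fun x' : Fin 2 → ℝ =>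
            fderiv ℝ (fun x'' : Fin 2 → ℝ => V (t, x'')) x' (Pi.single 1 1)) x
              (Pi.single 1 1)
          - fderiv ℝ (fun x' : Fin 2 → ℝ =>
            fderiv ℝ (fun x'' : Fin 2 → ℝ => V (t, x'')) x' (Pi.single 0 1)) x
              (Pi.single 0 1))
        = (a₂ t - a₁ t) * fderiv ℝ (fun x' : Fin 2 → ℝ =>
            fderiv ℝ (fun x'' : Fin 2 → ℝ => V (t, x'')) x' (Pi.single 1 1)) x
              (Pi.single 0 1) := by
  intro t x
  set f : (Fin 2 → ℝ) → ℝ := fun x'' => V (t, x'') with hf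
  -- second derivatives
  set h : Fin 2 → Fin 2 → ℝ := fun c b' =>
    fderiv ℝ (fun x' => fderiv ℝ f x' (Pi.single b' 1)) x (Pi.single c 1) with hh
  have hsym : h 0 1 = h 1 0 := snd_symm f (hV t) x (Pi.single 1 1) (Pi.single 0 1)
  -- the time-derivative terms
  have hD0 : ∀ b' : Fin 2,
      deriv (fun s : ℝ => fderiv ℝ (fun x' : Fin 2 → ℝ => A (s, x') 0) x (Pi.single b' 1)) t
        = deriv σ t * (Pi.single b' 1 : Fin 2 → ℝ) 1 := by
    intro b'
    have he : (fun s : ℝ => fderiv ℝ (fun x' : Fin 2 → ℝ => A (s, x') 0) x (Pi.single b' 1))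
        = fun s => σ s * (Pi.single b' 1 : Fin 2 → ℝ) 1 := by
      funext s
      have h1 : (fun x' : Fin 2 → ℝ => A (s, x') 0) = fun x' => σ s * x' 1 := by
        funext x'; rw [hA]; simp
      rw [h1, ((hasFDerivAt_apply (1 : Fin 2) x).const_mul (σ s)).fderiv]
      simp
    rw [he, deriv_mul_const (hσ t)]
  have hD1 : ∀ b' : Fin 2,
      deriv (fun s : ℝ => fderiv ℝ (fun x' : Fin 2 → ℝ => A (s, x') 1) x (Pi.single b' 1)) t
        = -(deriv σ t * (Pi.single b' 1 : Fin 2 → ℝ) 0) := by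
    intro b'
    have he : (fun s : ℝ => fderiv ℝ (fun x' : Fin 2 → ℝ => A (s, x') 1) x (Pi.single b' 1))
        = fun s => -(σ s * (Pi.single b' 1 : Fin 2 → ℝ) 0) := by
      funext s
      have h1 : (fun x' : Fin 2 → ℝ => A (s, x') 1) = fun x' => -(σ s * x' 0) := by
        funext x'; rw [hA]; simp
      rw [h1, (((hasFDerivAt_apply (0 : Fin 2) x).const_mul (σ s)).fun_neg).fderiv]
      simp
    rw [he, deriv.fun_neg, deriv_mul_const (hσ t)]
  -- Γ² entries
  have hΓ2 : Γ t ^ 2 = !![-(σ t * σ t), 0; 0, -(σ t * σ t)] := by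
    rw [hΓ, pow_two]
    ext i j
    fin_cases i <;> fin_cases j <;>
      simp [Matrix.mul_apply, Fin.sum_univ_two]
  -- entries of M
  have hM00 : M t x 0 0 = h 0 0 + σ t * σ t := by
    rw [hM]; simp only [Matrix.of_apply, hΓ2, hD0 0]
    simp [hh, hf]
  have hM11 : M t x 1 1 = h 1 1 + σ t * σ t := by
    rw [hM]; simp only [Matrix.of_apply, hΓ2, hD1 1]
    simp [hh, hf]
  have hM01 : M t x 0 1 = h 0 1 := by
    rw [hM]; simp only [Matrix.of_apply, hΓ2, hD0 1, hD1 0]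
    simp [hh, hf]
  have hM10 : M t x 1 0 = h 1 0 := by
    rw [hM]; simp only [Matrix.of_apply, hΓ2, hD1 0, hD0 1]
    simp [hh, hf]
  have entry : ∀ i j, (g t * M t x) i j = g t i 0 * M t x 0 j + g t i 1 * M t x 1 j :=
    fun i j => by rw [Matrix.mul_apply, Fin.sum_univ_two]
  have key : (g t * M t x)ᵀ = g t * M t x ↔
      b t * M t x 0 0 + a₂ t * M t x 1 0 = a₁ t * M t x 0 1 + b t * M t x 1 1 := by
    constructor
    · intro H
      have h2 := congrFun (congrFun H 0) 1
      rw [Matrix.transpose_apply, entry, entry] at h2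
      simpa [hg t] using h2
    · intro H
      ext i j
      rw [Matrix.transpose_apply, entry, entry]
      fin_cases i <;> fin_cases j <;> simp [hg t] <;> linarith
  rw [key, hM00, hM11, hM01, hM10]
  change _ ↔ b t * (h 1 1 - h 0 0) = (a₂ t - a₁ t) * h 0 1
  rw [hsym]
  constructor
  · intro H; linear_combination -H
  · intro H; linear_combination -H
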